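/- arXiv:2006.09946 — 2 statements merged into one kernel-verified Lean document; each statement's English description precedes it below -/
import Mathlib

section
/- Let M, L ∈ ℝ^{d×d} be symmetric invertible matrices with L − M positive semidefinite such that M and L are congruent. Then every f ∈ S(M,L) has exactly one critical point, i.e., there exists a unique z* ∈ ℝ^d with ∇f(z*) = 0. -/
open Matrix

/-- Gradient of `f : ℝ^ι → ℝ` in coordinates. -/
noncomputable def grad {ι : Type*} [Fintype ι] [DecidableEq ι]
    (f : (ι → ℝ) → ℝ) (z : ι → ℝ) : ι → ℝ :=
  fun i => fderiv ℝ f z (Pi.single i 1)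

/-- The class `S(M,L)`. -/
def SClass {ι : Type*} [Fintype ι] [DecidableEq ι]
    (M L : Matrix ι ι ℝ) (f : (ι → ℝ) → ℝ) : Prop :=
  ContDiff ℝ 1 f ∧ ∀ z₁ z₂ : ι → ℝ,
    (1/2) * ((z₂ - z₁) ⬝ᵥ M.mulVec (z₂ - z₁)) ≤ f z₂ - f z₁ - grad f z₁ ⬝ᵥ (z₂ - z₁) ∧
    f z₂ - f z₁ - grad f z₁ ⬝ᵥ (z₂ - z₁) ≤ (1/2) * ((z₂ - z₁) ⬝ᵥ L.mulVec (z₂ - z₁))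

/-- Two real symmetric matrices are congruent if `Tᵀ M T = L` for some invertible `T`. -/
def MatrixCongruent {d : ℕ} (M L : Matrix (Fin d) (Fin d) ℝ) : Prop :=
  ∃ T : Matrix (Fin d) (Fin d) ℝ, IsUnit T ∧ Tᵀ * M * T = L

set_option linter.unusedSectionVars false

namespace Stmt11Aux

open Finset Module

variable {d : ℕ}

lemma dot_self_nonneg (v : Fin d → ℝ) : 0 ≤ v ⬝ᵥ v :=
  Finset.sum_nonneg fun i _ => mul_self_nonneg (v i)

lemma sum_dot {ι : Type*} (s : Finset ι) (f : ι → Fin d → ℝ) (w : Fin d → ℝ) :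
    (∑ i ∈ s, f i) ⬝ᵥ w = ∑ i ∈ s, f i ⬝ᵥ w := by
  simp only [dotProduct, Finset.sum_apply, Finset.sum_mul]
  exact Finset.sum_comm

lemma dot_sum {ι : Type*} (s : Finset ι) (w : Fin d → ℝ) (f : ι → Fin d → ℝ) :
    w ⬝ᵥ (∑ i ∈ s, f i) = ∑ i ∈ s, w ⬝ᵥ f i := by
  simp only [dotProduct, Finset.sum_apply, Finset.mul_sum]
  exact Finset.sum_comm

lemma mulVec_sumv {ι : Type*} (A : Matrix (Fin d) (Fin d) ℝ) (s : Finset ι)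
    (f : ι → Fin d → ℝ) : A *ᵥ (∑ i ∈ s, f i) = ∑ i ∈ s, A *ᵥ f i := by
  simpa only [Matrix.mulVecLin_apply] using map_sum A.mulVecLin f s

/-- expansion of the quadratic form on a combination of "eigenvectors" -/
lemma quad_repr (A : Matrix (Fin d) (Fin d) ℝ) (v : Fin d → Fin d → ℝ) (ev : Fin d → ℝ)
    (hortho : ∀ i j, v i ⬝ᵥ v j = if i = j then (1:ℝ) else 0)
    (heig : ∀ i, A *ᵥ v i = ev i • v i) (S : Finset (Fin d)) (c : Fin d → ℝ) :
    (∑ i ∈ S, c i • v i) ⬝ᵥ A *ᵥ (∑ i ∈ S, c i • v i) = ∑ i ∈ S, ev i * c i ^ 2 := by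
  rw [mulVec_sumv]
  have h1 : ∀ i ∈ S, A *ᵥ (c i • v i) = (c i * ev i) • v i := fun i _ => by
    rw [Matrix.mulVec_smul, heig i, smul_smul]
  rw [Finset.sum_congr rfl h1, sum_dot]
  refine Finset.sum_congr rfl fun i hi => ?_
  rw [dot_sum, Finset.sum_eq_single i]
  · rw [smul_dotProduct, dotProduct_smul, hortho i i, if_pos rfl]
    simp only [smul_eq_mul]; ring
  · intro j _ hne
    rw [smul_dotProduct, dotProduct_smul, hortho i j,
      if_neg (fun h => hne h.symm)]
    simp
  · intro h; exact absurd hi h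

lemma dot_repr (v : Fin d → Fin d → ℝ)
    (hortho : ∀ i j, v i ⬝ᵥ v j = if i = j then (1:ℝ) else 0)
    (S : Finset (Fin d)) (c : Fin d → ℝ) :
    (∑ i ∈ S, c i • v i) ⬝ᵥ (∑ i ∈ S, c i • v i) = ∑ i ∈ S, c i ^ 2 := by
  have := quad_repr (1 : Matrix (Fin d) (Fin d) ℝ) v (fun _ => 1) hortho
    (fun i => by rw [Matrix.one_mulVec, one_smul]) S c
  simpa using this

/-- The signed spectral subspaces of an invertible real symmetric matrix. -/
lemma signed_subspaces (A : Matrix (Fin d) (Fin d) ℝ) (hA : A.IsHermitian)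
    (hinv : IsUnit A) :
    ∃ (Xp Xn : Submodule ℝ (Fin d → ℝ)) (μ : ℝ), 0 < μ ∧
      (∀ x ∈ Xp, μ * (x ⬝ᵥ x) ≤ x ⬝ᵥ A *ᵥ x) ∧
      (∀ x ∈ Xn, x ⬝ᵥ A *ᵥ x ≤ -μ * (x ⬝ᵥ x)) ∧
      finrank ℝ Xp + finrank ℝ Xn = d := by
  classical
  set b := hA.eigenvectorBasis with hb
  set ev := hA.eigenvalues with hev
  set v : Fin d → (Fin d → ℝ) := fun i => ⇑(b i) with hv
  have heig : ∀ i, A *ᵥ v i = ev i • v i := fun i => hA.mulVec_eigenvectorBasis i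
  have hortho : ∀ i j, v i ⬝ᵥ v j = if i = j then (1:ℝ) else 0 := by
    intro i j
    have h := (orthonormal_iff_ite (𝕜 := ℝ)).mp b.orthonormal i j
    have h2 : (inner ℝ (b i) (b j) : ℝ) = v i ⬝ᵥ v j := by
      simp [PiLp.inner_apply, RCLike.inner_apply, dotProduct, hv]
      exact Finset.sum_congr rfl fun _ _ => mul_comm _ _
    rw [← h2, h]
  have hev0 : ∀ i, ev i ≠ 0 := by
    have hdet : A.det = ∏ i, ev i := by
      simpa using hA.det_eq_prod_eigenvalues
    have : A.det ≠ 0 := by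
      have := (Matrix.isUnit_iff_isUnit_det A).mp hinv
      exact this.ne_zero
    rw [hdet] at this
    exact fun i hi => this (Finset.prod_eq_zero (Finset.mem_univ i) hi)
  -- a uniform lower bound on |ev|
  obtain ⟨μ, hμpos, hμ⟩ : ∃ μ : ℝ, 0 < μ ∧ ∀ i, μ ≤ |ev i| := by
    rcases isEmpty_or_nonempty (Fin d) with hempty | hne
    · exact ⟨1, one_pos, fun i => (IsEmpty.false i).elim⟩
    · refine ⟨Finset.univ.inf' (Finset.univ_nonempty) (fun i => |ev i|), ?_, ?_⟩
      · rw [Finset.lt_inf'_iff]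
        exact fun i _ => abs_pos.mpr (hev0 i)
      · exact fun i => Finset.inf'_le _ (Finset.mem_univ i)
  have hvinj : Function.Injective v := by
    intro i j hij
    by_contra hne
    have h1 := hortho i i
    have h2 := hortho i j
    rw [if_pos rfl] at h1
    rw [if_neg hne, ← hij] at h2
    rw [h2] at h1; exact one_ne_zero h1.symm
  have hli : LinearIndependent ℝ v := by
    rw [linearIndependent_iff']
    intro s g hsum i hi
    have h := congrArg (fun w => w ⬝ᵥ v i) hsum
    rw [sum_dot] at h
    have h2 : ∀ j ∈ s, (g j • v j) ⬝ᵥ v i = if j = i then g j else 0 := by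
      intro j _
      rw [smul_dotProduct, hortho j i]
      by_cases hji : j = i <;> simp [hji]
    rw [Finset.sum_congr rfl h2, Finset.sum_ite_eq' s i g] at h
    simpa [hi, zero_dotProduct] using h
  set Sp : Finset (Fin d) := Finset.univ.filter (fun i => 0 < ev i) with hSp
  set Sn : Finset (Fin d) := Finset.univ.filter (fun i => ev i < 0) with hSn
  -- submodules
  set Xp : Submodule ℝ (Fin d → ℝ) := Submodule.span ℝ ↑(Sp.image v) with hXp
  set Xn : Submodule ℝ (Fin d → ℝ) := Submodule.span ℝ ↑(Sn.image v) with hXn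
  have hrepr : ∀ (S : Finset (Fin d)) (x : Fin d → ℝ),
      x ∈ Submodule.span ℝ (↑(S.image v) : Set (Fin d → ℝ)) →
      ∃ c : Fin d → ℝ, x = ∑ i ∈ S, c i • v i := by
    intro S x hx
    rw [Submodule.mem_span_finset] at hx
    obtain ⟨fc, -, hfc⟩ := hx
    refine ⟨fun i => fc (v i), ?_⟩
    rw [← hfc, Finset.sum_image (fun i _ j _ h => hvinj h)]
  have hrank : ∀ S : Finset (Fin d),
      finrank ℝ (Submodule.span ℝ (↑(S.image v) : Set (Fin d → ℝ))) = S.card := by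
    intro S
    have h1 : (↑(S.image v) : Set (Fin d → ℝ)) = Set.range (v ∘ (Subtype.val : ↥S → Fin d)) := by
      rw [Finset.coe_image]
      exact (Set.image_eq_range v ↑S).trans rfl
    rw [h1, finrank_span_eq_card (hli.comp Subtype.val Subtype.val_injective),
      Fintype.card_coe]
  refine ⟨Xp, Xn, μ, hμpos, ?_, ?_, ?_⟩
  · intro x hx
    obtain ⟨c, rfl⟩ := hrepr Sp x hx
    rw [quad_repr A v ev hortho heig, dot_repr v hortho, Finset.mul_sum]
    refine Finset.sum_le_sum fun i hi => ?_
    have hpos : 0 < ev i := (Finset.mem_filter.mp hi).2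
    have : μ ≤ ev i := le_trans (hμ i) (le_of_eq (abs_of_pos hpos))
    nlinarith [sq_nonneg (c i)]
  · intro x hx
    obtain ⟨c, rfl⟩ := hrepr Sn x hx
    rw [quad_repr A v ev hortho heig, dot_repr v hortho, Finset.mul_sum]
    refine Finset.sum_le_sum fun i hi => ?_
    have hneg : ev i < 0 := (Finset.mem_filter.mp hi).2
    have : μ ≤ -ev i := le_trans (hμ i) (le_of_eq (abs_of_neg hneg))
    nlinarith [sq_nonneg (c i)]
  · rw [hXp, hXn, hrank Sp, hrank Sn]
    have hdisj : Disjoint Sp Sn := by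
      rw [Finset.disjoint_left]
      intro i hip hin
      rw [hSp, Finset.mem_filter] at hip
      rw [hSn, Finset.mem_filter] at hin
      linarith [hip.2, hin.2]
    have hunion : Sp ∪ Sn = Finset.univ := by
      ext i
      simp only [hSp, hSn, Finset.mem_union, Finset.mem_filter, Finset.mem_univ, true_and,
        iff_true]
      exact ((hev0 i).lt_or_gt).symm
    rw [← Finset.card_union_of_disjoint hdisj, hunion, Finset.card_univ, Fintype.card_fin]

lemma dot_sym {A : Matrix (Fin d) (Fin d) ℝ} (hA : A.IsSymm) (p q : Fin d → ℝ) :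
    p ⬝ᵥ A *ᵥ q = q ⬝ᵥ A *ᵥ p := by
  rw [Matrix.dotProduct_mulVec q A p, ← Matrix.mulVec_transpose, hA.eq,
    dotProduct_comm]

lemma dot_cs (a b : Fin d → ℝ) : (a ⬝ᵥ b) ^ 2 ≤ (a ⬝ᵥ a) * (b ⬝ᵥ b) := by
  simpa only [dotProduct, sq] using
    Finset.sum_mul_sq_le_sq_mul_sq Finset.univ a b

lemma single_sq_le (v : Fin d → ℝ) (i : Fin d) : v i ^ 2 ≤ v ⬝ᵥ v := by
  have := Finset.single_le_sum (f := fun k => v k * v k)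
    (fun k _ => mul_self_nonneg (v k)) (Finset.mem_univ i)
  simpa [dotProduct, sq] using this

/-- Crude quadratic form bound. -/
lemma quad_bound (A : Matrix (Fin d) (Fin d) ℝ) (v : Fin d → ℝ) :
    v ⬝ᵥ A *ᵥ v ≤ (∑ i, ∑ j, |A i j|) * (v ⬝ᵥ v) := by
  have h1 : v ⬝ᵥ A *ᵥ v = ∑ i, ∑ j, v i * A i j * v j := by
    simp only [dotProduct, Matrix.mulVec, Finset.mul_sum]
    exact Finset.sum_congr rfl fun i _ => Finset.sum_congr rfl fun j _ => by ring
  rw [h1, Finset.sum_mul]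
  refine Finset.sum_le_sum fun i _ => ?_
  rw [Finset.sum_mul]
  refine Finset.sum_le_sum fun j _ => ?_
  calc v i * A i j * v j ≤ |v i * A i j * v j| := le_abs_self _
    _ = |A i j| * (|v i| * |v j|) := by rw [abs_mul, abs_mul]; ring
    _ ≤ |A i j| * (v ⬝ᵥ v) := by
        refine mul_le_mul_of_nonneg_left ?_ (abs_nonneg _)
        nlinarith [sq_abs (v i), sq_abs (v j), single_sq_le v i, single_sq_le v j,
          sq_nonneg (|v i| - |v j|), abs_nonneg (v i), abs_nonneg (v j)]

/-- Crude operator-norm-squared bound for `mulVec`. -/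
lemma mulVec_sq_bound (A : Matrix (Fin d) (Fin d) ℝ) (v : Fin d → ℝ) :
    (A *ᵥ v) ⬝ᵥ (A *ᵥ v) ≤ (∑ i, ∑ j, A i j ^ 2) * (v ⬝ᵥ v) := by
  rw [Finset.sum_mul]
  simp only [dotProduct, Matrix.mulVec]
  refine Finset.sum_le_sum fun i _ => ?_
  have h := Finset.sum_mul_sq_le_sq_mul_sq Finset.univ (A i) v
  calc (A i ⬝ᵥ v) * (A i ⬝ᵥ v) = (∑ j, A i j * v j) ^ 2 := by
        simp [dotProduct, sq]
    _ ≤ (∑ j, A i j ^ 2) * ∑ j, v j ^ 2 := h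
    _ = (∑ j, A i j ^ 2) * ∑ j, v j * v j := by
        congr 1; exact Finset.sum_congr rfl fun j _ => sq (v j) ▸ (by ring)



lemma dot_add_expand (x y : Fin d → ℝ) :
    (x + y) ⬝ᵥ (x + y) = x ⬝ᵥ x + 2 * (x ⬝ᵥ y) + y ⬝ᵥ y := by
  simp only [add_dotProduct, dotProduct_add]
  linarith [dotProduct_comm y x]

lemma dot_sub_expand (x y : Fin d → ℝ) :
    (x - y) ⬝ᵥ (x - y) = x ⬝ᵥ x - 2 * (x ⬝ᵥ y) + y ⬝ᵥ y := by
  simp only [sub_dotProduct, dotProduct_sub]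
  linarith [dotProduct_comm y x]

lemma dot_quad_sub {A : Matrix (Fin d) (Fin d) ℝ} (hA : A.IsSymm) (p q : Fin d → ℝ) :
    (p - q) ⬝ᵥ A *ᵥ (p - q) = p ⬝ᵥ A *ᵥ p - 2 * (q ⬝ᵥ A *ᵥ p) + q ⬝ᵥ A *ᵥ q := by
  have hsw := dot_sym hA p q
  simp only [Matrix.mulVec_sub, dotProduct_sub, sub_dotProduct]
  linarith

section SClassAlg

variable {M L : Matrix (Fin d) (Fin d) ℝ} {f : (Fin d → ℝ) → ℝ}
  (hM : M.IsSymm) (hL : L.IsSymm) (hf : SClass M L f)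

include hM hL hf in
/-- Fundamental inequality obtained from one lower and one upper instantiation. -/
lemma fact1 (z₁ z₂ y : Fin d → ℝ) :
    (grad f z₂ - grad f z₁ - M *ᵥ (z₂ - z₁)) ⬝ᵥ y - (1/2) * (y ⬝ᵥ (L - M) *ᵥ y)
      ≤ f z₂ - f z₁ - grad f z₁ ⬝ᵥ (z₂ - z₁)
        - (1/2) * ((z₂ - z₁) ⬝ᵥ M *ᵥ (z₂ - z₁)) := by
  have hA := (hf.2 z₁ (z₂ - y)).1
  have hB := (hf.2 z₂ (z₂ - y)).2
  have d1 : z₂ - y - z₁ = (z₂ - z₁) - y := by abel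
  have d2 : z₂ - y - z₂ = -y := by abel
  rw [d1] at hA
  rw [d2] at hB
  have e1 : ((z₂ - z₁) - y) ⬝ᵥ M *ᵥ ((z₂ - z₁) - y)
      = (z₂ - z₁) ⬝ᵥ M *ᵥ (z₂ - z₁) - 2 * (y ⬝ᵥ M *ᵥ (z₂ - z₁)) + y ⬝ᵥ M *ᵥ y :=
    dot_quad_sub hM (z₂ - z₁) y
  have e2 : grad f z₁ ⬝ᵥ ((z₂ - z₁) - y) = grad f z₁ ⬝ᵥ (z₂ - z₁) - grad f z₁ ⬝ᵥ y := by
    rw [dotProduct_sub]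
  have e3 : (-y) ⬝ᵥ L *ᵥ (-y) = y ⬝ᵥ L *ᵥ y := by
    rw [Matrix.mulVec_neg, neg_dotProduct, dotProduct_neg, neg_neg]
  have e4 : grad f z₂ ⬝ᵥ (-y) = -(grad f z₂ ⬝ᵥ y) := dotProduct_neg _ _
  have e5 : y ⬝ᵥ (L - M) *ᵥ y = y ⬝ᵥ L *ᵥ y - y ⬝ᵥ M *ᵥ y := by
    rw [Matrix.sub_mulVec, dotProduct_sub]
  have e6 : (grad f z₂ - grad f z₁ - M *ᵥ (z₂ - z₁)) ⬝ᵥ y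
      = grad f z₂ ⬝ᵥ y - grad f z₁ ⬝ᵥ y - y ⬝ᵥ M *ᵥ (z₂ - z₁) := by
    rw [sub_dotProduct, sub_dotProduct,
      dotProduct_comm (M *ᵥ (z₂ - z₁)) y]
  rw [e1, e2] at hA
  rw [e3, e4] at hB
  rw [e5, e6]
  linarith

include hM hL hf in
/-- Key cocoercivity-type inequality. -/
lemma key1 (z₁ z₂ y : Fin d → ℝ) :
    2 * ((grad f z₂ - grad f z₁ - M *ᵥ (z₂ - z₁)) ⬝ᵥ y) - y ⬝ᵥ (L - M) *ᵥ y
      ≤ (grad f z₂ - grad f z₁ - M *ᵥ (z₂ - z₁)) ⬝ᵥ (z₂ - z₁) := by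
  have h1 := fact1 hM hL hf z₁ z₂ y
  have h2 := fact1 hM hL hf z₂ z₁ (-y)
  have r2 : z₁ - z₂ = -(z₂ - z₁) := by abel
  rw [r2, Matrix.mulVec_neg] at h2
  have r1 : grad f z₁ - grad f z₂ - -(M *ᵥ (z₂ - z₁))
      = -(grad f z₂ - grad f z₁ - M *ᵥ (z₂ - z₁)) := by abel
  rw [r1, neg_dotProduct, dotProduct_neg, neg_neg] at h2
  have r3 : (-y) ⬝ᵥ (L - M) *ᵥ (-y) = y ⬝ᵥ (L - M) *ᵥ y := by
    rw [Matrix.mulVec_neg, neg_dotProduct, dotProduct_neg, neg_neg]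
  rw [r3] at h2
  have r4 : grad f z₂ ⬝ᵥ -(z₂ - z₁) = -(grad f z₂ ⬝ᵥ (z₂ - z₁)) := dotProduct_neg _ _
  have r5 : (-(z₂ - z₁)) ⬝ᵥ (-(M *ᵥ (z₂ - z₁))) = (z₂ - z₁) ⬝ᵥ M *ᵥ (z₂ - z₁) := by
    rw [neg_dotProduct, dotProduct_neg, neg_neg]
  rw [r4, r5] at h2
  have e7 : (grad f z₂ - grad f z₁ - M *ᵥ (z₂ - z₁)) ⬝ᵥ (z₂ - z₁)
      = grad f z₂ ⬝ᵥ (z₂ - z₁) - grad f z₁ ⬝ᵥ (z₂ - z₁)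
        - (z₂ - z₁) ⬝ᵥ M *ᵥ (z₂ - z₁) := by
    rw [sub_dotProduct, sub_dotProduct,
      dotProduct_comm (M *ᵥ (z₂ - z₁)) (z₂ - z₁)]
  rw [e7]
  linarith

include hM hL hf in
set_option maxHeartbeats 1000000 in
/-- Squared Lipschitz bound for gradient differences. -/
lemma grad_lip :
    ∃ κ : ℝ, 0 ≤ κ ∧ ∀ z₁ z₂ : Fin d → ℝ,
      (grad f z₂ - grad f z₁) ⬝ᵥ (grad f z₂ - grad f z₁)
        ≤ κ * ((z₂ - z₁) ⬝ᵥ (z₂ - z₁)) := by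
  classical
  set κP : ℝ := ∑ i, ∑ j, |(L - M) i j| with hκP
  set cM : ℝ := ∑ i, ∑ j, (M i j) ^ 2 with hcM
  have hκP0 : 0 ≤ κP :=
    Finset.sum_nonneg fun i _ => Finset.sum_nonneg fun j _ => abs_nonneg _
  have hcM0 : 0 ≤ cM :=
    Finset.sum_nonneg fun i _ => Finset.sum_nonneg fun j _ => sq_nonneg _
  refine ⟨2 * (κP + 1) ^ 2 + 2 * cM, by positivity, ?_⟩
  intro z₁ z₂
  set Δ := z₂ - z₁ with hΔ
  set u := grad f z₂ - grad f z₁ - M *ᵥ Δ with hu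
  set t : ℝ := 1 / (κP + 1) with ht
  have ht0 : 0 < t := by positivity
  have htκ : t * κP ≤ 1 := by
    rw [ht]; rw [div_mul_eq_mul_div, div_le_one (by linarith)]; linarith
  -- step 1 : t * (u ⬝ᵥ u) ≤ u ⬝ᵥ Δ
  have h1 : t * (u ⬝ᵥ u) ≤ u ⬝ᵥ Δ := by
    have hk := key1 hM hL hf z₁ z₂ (t • u)
    rw [← hΔ, ← hu] at hk
    have q1 : u ⬝ᵥ (t • u) = t * (u ⬝ᵥ u) := by
      rw [dotProduct_smul, smul_eq_mul]
    have q2 : (t • u) ⬝ᵥ (L - M) *ᵥ (t • u) = t ^ 2 * (u ⬝ᵥ (L - M) *ᵥ u) := by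
      rw [Matrix.mulVec_smul, smul_dotProduct, dotProduct_smul]
      simp only [smul_eq_mul]; ring
    rw [q1, q2] at hk
    have q3 : u ⬝ᵥ (L - M) *ᵥ u ≤ κP * (u ⬝ᵥ u) := quad_bound (L - M) u
    have q4 : 0 ≤ u ⬝ᵥ u := dot_self_nonneg u
    nlinarith [mul_le_mul_of_nonneg_left q3 (sq_nonneg t),
      mul_nonneg (mul_nonneg ht0.le (sub_nonneg.mpr htκ)) q4]
  have huΔ : 0 ≤ u ⬝ᵥ Δ := le_trans (mul_nonneg ht0.le (dot_self_nonneg u)) h1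
  -- step 2 : u ⬝ᵥ u ≤ (κP+1)^2 * (Δ ⬝ᵥ Δ)
  have h2 : u ⬝ᵥ u ≤ (κP + 1) ^ 2 * (Δ ⬝ᵥ Δ) := by
    have hcs := dot_cs u Δ
    have h1' : u ⬝ᵥ u ≤ (κP + 1) * (u ⬝ᵥ Δ) := by
      have heq : (κP + 1) * (t * (u ⬝ᵥ u)) = u ⬝ᵥ u := by
        rw [ht]; field_simp
      nlinarith [mul_le_mul_of_nonneg_left h1 (by positivity : (0:ℝ) ≤ κP + 1)]
    rcases eq_or_lt_of_le (dot_self_nonneg u) with h0 | h0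
    · rw [← h0]
      exact mul_nonneg (sq_nonneg _) (dot_self_nonneg Δ)
    · have a1 : (u ⬝ᵥ u) * (u ⬝ᵥ u) ≤ ((κP + 1) * (u ⬝ᵥ Δ)) * ((κP + 1) * (u ⬝ᵥ Δ)) :=
        mul_self_le_mul_self (dot_self_nonneg u) h1'
      have a2 : (κP + 1) ^ 2 * ((u ⬝ᵥ Δ) ^ 2) ≤ (κP + 1) ^ 2 * ((u ⬝ᵥ u) * (Δ ⬝ᵥ Δ)) :=
        mul_le_mul_of_nonneg_left hcs (sq_nonneg _)
      have hsq : (u ⬝ᵥ u) * (u ⬝ᵥ u) ≤ ((κP + 1) ^ 2 * (Δ ⬝ᵥ Δ)) * (u ⬝ᵥ u) := by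
        nlinarith [a1, a2]
      exact le_of_mul_le_mul_right hsq h0
  -- step 3 : combine
  have h3 : (M *ᵥ Δ) ⬝ᵥ (M *ᵥ Δ) ≤ cM * (Δ ⬝ᵥ Δ) := mulVec_sq_bound M Δ
  have h4 : grad f z₂ - grad f z₁ = u + M *ᵥ Δ := by rw [hu]; abel
  rw [h4]
  have e1 : (u + M *ᵥ Δ) ⬝ᵥ (u + M *ᵥ Δ)
      = u ⬝ᵥ u + 2 * (u ⬝ᵥ (M *ᵥ Δ)) + (M *ᵥ Δ) ⬝ᵥ (M *ᵥ Δ) := dot_add_expand u (M *ᵥ Δ)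
  have e2 : 0 ≤ (u - M *ᵥ Δ) ⬝ᵥ (u - M *ᵥ Δ) := dot_self_nonneg _
  have e3 : (u - M *ᵥ Δ) ⬝ᵥ (u - M *ᵥ Δ)
      = u ⬝ᵥ u - 2 * (u ⬝ᵥ (M *ᵥ Δ)) + (M *ᵥ Δ) ⬝ᵥ (M *ᵥ Δ) := dot_sub_expand u (M *ᵥ Δ)
  rw [e1]
  have e4 : 0 ≤ u ⬝ᵥ u - 2 * (u ⬝ᵥ (M *ᵥ Δ)) + (M *ᵥ Δ) ⬝ᵥ (M *ᵥ Δ) := e3 ▸ e2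
  linarith [h2, h3, e4]

end SClassAlg


lemma dot_transpose (A : Matrix (Fin d) (Fin d) ℝ) (w v : Fin d → ℝ) :
    (Aᵀ *ᵥ w) ⬝ᵥ v = w ⬝ᵥ (A *ᵥ v) := by
  rw [Matrix.mulVec_transpose, ← Matrix.dotProduct_mulVec]

lemma congr_quad (T A : Matrix (Fin d) (Fin d) ℝ) (x : Fin d → ℝ) :
    (T *ᵥ x) ⬝ᵥ A *ᵥ (T *ᵥ x) = x ⬝ᵥ (Tᵀ * A * T) *ᵥ x := by
  rw [mul_assoc, ← Matrix.mulVec_mulVec, ← Matrix.mulVec_mulVec,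
    Matrix.dotProduct_mulVec x Tᵀ, Matrix.vecMul_transpose]

end Stmt11Aux

open Stmt11Aux Module

set_option maxHeartbeats 4000000 in
theorem stmt_11 {d : ℕ} (M L : Matrix (Fin d) (Fin d) ℝ)
    (hM : M.IsSymm) (hL : L.IsSymm) (hMinv : IsUnit M) (hLinv : IsUnit L)
    (hLM : (L - M).PosSemidef) (hcong : MatrixCongruent M L) :
    ∀ f : (Fin d → ℝ) → ℝ, SClass M L f → ∃! z : Fin d → ℝ, grad f z = 0 := by
  classical
  intro f hf
  obtain ⟨T, hT, hTML⟩ := hcong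
  have hVd : finrank ℝ (Fin d → ℝ) = d := by
    simp [Module.finrank_pi]
  -- hermitian versions
  have hMh : M.IsHermitian := by
    show Mᴴ = M
    rw [Matrix.conjTranspose_eq_transpose_of_trivial]; exact hM
  have hnegLh : (-L).IsHermitian := by
    show (-L)ᴴ = -L
    rw [Matrix.conjTranspose_neg, Matrix.conjTranspose_eq_transpose_of_trivial, hL.eq]
  have hnegLinv : IsUnit (-L) := by
    have h1 : (-1 : Matrix (Fin d) (Fin d) ℝ) * L = -L := neg_one_mul L
    exact h1 ▸ (isUnit_one.neg.mul hLinv)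
  obtain ⟨X, Xn, μ₁, hμ₁, hX, hXn, hXrank⟩ := signed_subspaces M hMh hMinv
  obtain ⟨Y, Np, μ₂, hμ₂, hY', hNp', hYrank⟩ := signed_subspaces (-L) hnegLh hnegLinv
  have hY : ∀ y ∈ Y, y ⬝ᵥ L *ᵥ y ≤ -μ₂ * (y ⬝ᵥ y) := by
    intro y hy
    have h := hY' y hy
    rw [Matrix.neg_mulVec, dotProduct_neg] at h
    linarith
  have hNp : ∀ x ∈ Np, μ₂ * (x ⬝ᵥ x) ≤ x ⬝ᵥ L *ᵥ x := by
    intro x hx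
    have h := hNp' x hx
    rw [Matrix.neg_mulVec, dotProduct_neg] at h
    linarith
  -- the linear equivalence given by T
  obtain ⟨Tu, hTu⟩ := hT
  have hTinv1 : T * (↑Tu⁻¹ : Matrix (Fin d) (Fin d) ℝ) = 1 := by
    rw [← hTu]; exact Tu.mul_inv
  have hTinv2 : (↑Tu⁻¹ : Matrix (Fin d) (Fin d) ℝ) * T = 1 := by
    rw [← hTu]; exact Tu.inv_mul
  set e : (Fin d → ℝ) ≃ₗ[ℝ] (Fin d → ℝ) :=
    LinearEquiv.ofLinear (Matrix.mulVecLin T) (Matrix.mulVecLin (↑Tu⁻¹))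
      (by rw [← Matrix.mulVecLin_mul, hTinv1, Matrix.mulVecLin_one])
      (by rw [← Matrix.mulVecLin_mul, hTinv2, Matrix.mulVecLin_one]) with he
  -- W := T(Np) is M-positive
  set W : Submodule ℝ (Fin d → ℝ) := Submodule.map (e : (Fin d → ℝ) →ₗ[ℝ] (Fin d → ℝ)) Np
    with hWdef
  have hWposM : ∀ w ∈ W, w ≠ 0 → 0 < w ⬝ᵥ M *ᵥ w := by
    intro w hw hw0
    obtain ⟨x, hx, rfl⟩ := hw
    have hex : (e : (Fin d → ℝ) →ₗ[ℝ] (Fin d → ℝ)) x = T *ᵥ x := rfl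
    rw [hex] at hw0 ⊢
    have hx0 : x ≠ 0 := by
      rintro rfl
      exact hw0 (Matrix.mulVec_zero T)
    have hq : (T *ᵥ x) ⬝ᵥ M *ᵥ (T *ᵥ x) = x ⬝ᵥ L *ᵥ x := by
      rw [congr_quad, hTML]
    rw [hq]
    have hxx : 0 < x ⬝ᵥ x := by
      rcases (dot_self_nonneg x).eq_or_lt with h | h
      · exact absurd (dotProduct_self_eq_zero.mp h.symm) hx0
      · exact h
    calc (0:ℝ) < μ₂ * (x ⬝ᵥ x) := by positivity
      _ ≤ x ⬝ᵥ L *ᵥ x := hNp x hx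
  -- W ⊓ Xn = ⊥
  have hWXn : W ⊓ Xn = ⊥ := by
    rw [Submodule.eq_bot_iff]
    rintro w ⟨hw1, hw2⟩
    by_contra hw0
    have h1 := hWposM w hw1 hw0
    have h2 := hXn w hw2
    have h3 : 0 ≤ w ⬝ᵥ w := dot_self_nonneg w
    nlinarith
  have hfrW : finrank ℝ W = finrank ℝ Np := LinearEquiv.finrank_map_eq e Np
  have hfr1 : finrank ℝ W + finrank ℝ Xn ≤ d := by
    have h := Submodule.finrank_sup_add_finrank_inf_eq W Xn
    rw [hWXn, finrank_bot, add_zero] at h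
    have h1 : finrank ℝ ↥(W ⊔ Xn) ≤ finrank ℝ (Fin d → ℝ) := Submodule.finrank_le _
    omega
  -- X ⊓ Y = ⊥
  have hXY : X ⊓ Y = ⊥ := by
    rw [Submodule.eq_bot_iff]
    rintro w ⟨hw1, hw2⟩
    have h1 := hX w hw1
    have h2 := hY w hw2
    have h3 : w ⬝ᵥ M *ᵥ w ≤ w ⬝ᵥ L *ᵥ w := by
      have h4 := hLM.dotProduct_mulVec_nonneg w
      have h5 : star w = w := by
        funext i; simp
      rw [h5, Matrix.sub_mulVec, dotProduct_sub] at h4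
      linarith
    have h6 : w ⬝ᵥ w = 0 := by
      nlinarith [dot_self_nonneg w]
    exact dotProduct_self_eq_zero.mp h6
  -- X ⊔ Y = ⊤
  have hXYsup : X ⊔ Y = ⊤ := by
    have h := Submodule.finrank_sup_add_finrank_inf_eq X Y
    rw [hXY, finrank_bot, add_zero] at h
    have h1 : finrank ℝ ↥(X ⊔ Y) ≤ finrank ℝ (Fin d → ℝ) := Submodule.finrank_le _
    apply Submodule.eq_top_of_finrank_eq
    rw [hVd]
    omega
  have hcompl : IsCompl X Y := ⟨disjoint_iff.mpr hXY, codisjoint_iff.mpr hXYsup⟩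
  -- projections
  set pX : (Fin d → ℝ) →ₗ[ℝ] (Fin d → ℝ) :=
    X.subtype.comp (X.linearProjOfIsCompl Y hcompl) with hpX
  set pY : (Fin d → ℝ) →ₗ[ℝ] (Fin d → ℝ) :=
    Y.subtype.comp (Y.linearProjOfIsCompl X hcompl.symm) with hpY
  have hpXmem : ∀ z, pX z ∈ X := fun z => (X.linearProjOfIsCompl Y hcompl z).2
  have hpYmem : ∀ z, pY z ∈ Y := fun z => (Y.linearProjOfIsCompl X hcompl.symm z).2
  have hpadd : ∀ z, pX z + pY z = z := fun z =>
    Submodule.projection_add_projection_eq_self hcompl z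
  have hpXX : ∀ x, x ∈ X → pX x = x := by
    intro x hx
    have h := Submodule.linearProjOfIsCompl_apply_left hcompl ⟨x, hx⟩
    exact congrArg Subtype.val h
  have hpYY : ∀ y, y ∈ Y → pY y = y := by
    intro y hy
    have h := Submodule.linearProjOfIsCompl_apply_left hcompl.symm ⟨y, hy⟩
    exact congrArg Subtype.val h
  have hpXY : ∀ y, y ∈ Y → pX y = 0 := by
    intro y hy
    have h := Submodule.linearProjOfIsCompl_apply_right' hcompl hy
    exact congrArg Subtype.val h
  have hpYX : ∀ x, x ∈ X → pY x = 0 := by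
    intro x hx
    have h := Submodule.linearProjOfIsCompl_apply_right' hcompl.symm hx
    exact congrArg Subtype.val h
  set ρ : (Fin d → ℝ) →ₗ[ℝ] (Fin d → ℝ) := pX - pY with hρ
  set R : Matrix (Fin d) (Fin d) ℝ := LinearMap.toMatrix' ρ with hR
  have hRapp : ∀ z, R *ᵥ z = pX z - pY z := by
    intro z
    rw [hR, ← Matrix.toLin'_apply, Matrix.toLin'_toMatrix']
    rfl
  have hρρ : ρ.comp ρ = LinearMap.id := by
    apply LinearMap.ext
    intro z
    have h1 : ρ z = pX z - pY z := rfl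
    have h2 : ρ (pX z - pY z) = pX (pX z - pY z) - pY (pX z - pY z) := rfl
    simp only [LinearMap.comp_apply, LinearMap.id_apply, h1, h2, map_sub]
    rw [hpXX _ (hpXmem z), hpXY _ (hpYmem z), hpYX _ (hpXmem z), hpYY _ (hpYmem z)]
    rw [sub_zero, zero_sub, sub_neg_eq_add]
    exact hpadd z
  have hRR : R * R = 1 := by
    rw [hR, ← LinearMap.toMatrix'_comp, hρρ, LinearMap.toMatrix'_id]
  have hRTRT : Rᵀ * Rᵀ = 1 := by
    rw [← Matrix.transpose_mul, hRR, Matrix.transpose_one]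
  -- the effective strong-monotonicity constant
  set μ : ℝ := min μ₁ μ₂ with hμdef
  have hμ : 0 < μ := lt_min hμ₁ hμ₂
  -- four-point inequality
  have hfour : ∀ z₁ z₂ : Fin d → ℝ,
      μ / 2 * ((z₂ - z₁) ⬝ᵥ (z₂ - z₁))
        ≤ (grad f z₂ - grad f z₁) ⬝ᵥ (R *ᵥ (z₂ - z₁)) := by
    intro z₁ z₂
    set a : Fin d → ℝ := pX (z₂ - z₁) with ha
    set b : Fin d → ℝ := pY (z₂ - z₁) with hb
    have hamem : a ∈ X := hpXmem _
    have hbmem : b ∈ Y := hpYmem _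
    have hab : a + b = z₂ - z₁ := hpadd _
    have hz2 : z₂ = z₁ + (a + b) := by rw [hab]; abel
    have hd1 : z₁ + b - z₂ = -a := by rw [hz2]; abel
    have hd2 : z₁ + a - z₁ = a := by abel
    have hd3 : z₁ + b - z₁ = b := by abel
    have hd4 : z₁ + a - z₂ = -b := by rw [hz2]; abel
    have h1 := (hf.2 z₂ (z₁ + b)).1
    have h2 := (hf.2 z₁ (z₁ + a)).1
    have h3 := (hf.2 z₁ (z₁ + b)).2
    have h4 := (hf.2 z₂ (z₁ + a)).2
    rw [hd1] at h1
    rw [hd2] at h2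
    rw [hd3] at h3
    rw [hd4] at h4
    have n1 : (-a) ⬝ᵥ M *ᵥ (-a) = a ⬝ᵥ M *ᵥ a := by
      rw [Matrix.mulVec_neg, neg_dotProduct, dotProduct_neg, neg_neg]
    have n2 : grad f z₂ ⬝ᵥ (-a) = -(grad f z₂ ⬝ᵥ a) := dotProduct_neg _ _
    have n3 : (-b) ⬝ᵥ L *ᵥ (-b) = b ⬝ᵥ L *ᵥ b := by
      rw [Matrix.mulVec_neg, neg_dotProduct, dotProduct_neg, neg_neg]
    have n4 : grad f z₂ ⬝ᵥ (-b) = -(grad f z₂ ⬝ᵥ b) := dotProduct_neg _ _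
    rw [n1, n2] at h1
    rw [n3, n4] at h4
    have hXa := hX a hamem
    have hYb := hY b hbmem
    have hRΔ : R *ᵥ (z₂ - z₁) = a - b := hRapp _
    rw [hRΔ]
    have e1 : (grad f z₂ - grad f z₁) ⬝ᵥ (a - b)
        = grad f z₂ ⬝ᵥ a - grad f z₁ ⬝ᵥ a - (grad f z₂ ⬝ᵥ b - grad f z₁ ⬝ᵥ b) := by
      rw [sub_dotProduct, dotProduct_sub, dotProduct_sub]
      ring
    have eΔ : (z₂ - z₁) ⬝ᵥ (z₂ - z₁) = a ⬝ᵥ a + 2 * (a ⬝ᵥ b) + b ⬝ᵥ b := by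
      rw [← hab]; exact dot_add_expand a b
    have e2 : 0 ≤ a ⬝ᵥ a - 2 * (a ⬝ᵥ b) + b ⬝ᵥ b :=
      dot_sub_expand a b ▸ dot_self_nonneg (a - b)
    have hμa : μ ≤ μ₁ := min_le_left _ _
    have hμb : μ ≤ μ₂ := min_le_right _ _
    have haa : 0 ≤ a ⬝ᵥ a := dot_self_nonneg a
    have hbb : 0 ≤ b ⬝ᵥ b := dot_self_nonneg b
    rw [e1, eΔ]
    nlinarith [mul_nonneg (sub_nonneg.mpr hμa) haa, mul_nonneg (sub_nonneg.mpr hμb) hbb,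
      mul_nonneg hμ.le (add_nonneg haa hbb), mul_nonneg hμ.le e2]
  -- gradient Lipschitz bound
  obtain ⟨κ, hκ0, hκ⟩ := grad_lip hM hL hf
  -- the monotone vector field
  set G : (Fin d → ℝ) → (Fin d → ℝ) := fun z => Rᵀ *ᵥ grad f z with hG
  have hGmono : ∀ z₁ z₂ : Fin d → ℝ,
      μ / 2 * ((z₂ - z₁) ⬝ᵥ (z₂ - z₁)) ≤ (G z₂ - G z₁) ⬝ᵥ (z₂ - z₁) := by
    intro z₁ z₂
    have h1 : G z₂ - G z₁ = Rᵀ *ᵥ (grad f z₂ - grad f z₁) := by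
      rw [hG, Matrix.mulVec_sub]
    rw [h1, dot_transpose]
    exact hfour z₁ z₂
  set cR : ℝ := ∑ i, ∑ j, (Rᵀ) i j ^ 2 with hcR
  have hcR0 : 0 ≤ cR :=
    Finset.sum_nonneg fun i _ => Finset.sum_nonneg fun j _ => sq_nonneg _
  set B : ℝ := cR * κ with hB
  have hB0 : 0 ≤ B := mul_nonneg hcR0 hκ0
  have hGlip : ∀ z₁ z₂ : Fin d → ℝ,
      (G z₂ - G z₁) ⬝ᵥ (G z₂ - G z₁) ≤ B * ((z₂ - z₁) ⬝ᵥ (z₂ - z₁)) := by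
    intro z₁ z₂
    have h1 : G z₂ - G z₁ = Rᵀ *ᵥ (grad f z₂ - grad f z₁) := by
      rw [hG, Matrix.mulVec_sub]
    rw [h1]
    calc (Rᵀ *ᵥ (grad f z₂ - grad f z₁)) ⬝ᵥ (Rᵀ *ᵥ (grad f z₂ - grad f z₁))
        ≤ cR * ((grad f z₂ - grad f z₁) ⬝ᵥ (grad f z₂ - grad f z₁)) :=
          mulVec_sq_bound Rᵀ _
      _ ≤ cR * (κ * ((z₂ - z₁) ⬝ᵥ (z₂ - z₁))) :=
          mul_le_mul_of_nonneg_left (hκ z₁ z₂) hcR0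
      _ = B * ((z₂ - z₁) ⬝ᵥ (z₂ - z₁)) := by rw [hB]; ring
  set γ : ℝ := (μ / 2) / (B + 1) with hγdef
  have hγ0 : 0 < γ := by
    apply div_pos (by linarith) (by linarith)
  have hγeq : γ * (B + 1) = μ / 2 := by
    rw [hγdef]; field_simp
  set c : ℝ := 1 - γ * (μ / 2) with hc
  have hc1 : c < 1 := by
    have : 0 < γ * (μ / 2) := by positivity
    rw [hc]; linarith
  -- contraction estimate for the map z ↦ z - γ • G z
  have hcontr : ∀ z₁ z₂ : Fin d → ℝ,
      ((z₂ - γ • G z₂) - (z₁ - γ • G z₁)) ⬝ᵥ ((z₂ - γ • G z₂) - (z₁ - γ • G z₁))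
        ≤ c * ((z₂ - z₁) ⬝ᵥ (z₂ - z₁)) := by
    intro z₁ z₂
    have hT1 : (z₂ - γ • G z₂) - (z₁ - γ • G z₁) = (z₂ - z₁) - γ • (G z₂ - G z₁) := by
      rw [smul_sub]; abel
    rw [hT1]
    have e1 : ((z₂ - z₁) - γ • (G z₂ - G z₁)) ⬝ᵥ ((z₂ - z₁) - γ • (G z₂ - G z₁))
        = (z₂ - z₁) ⬝ᵥ (z₂ - z₁) - 2 * γ * ((z₂ - z₁) ⬝ᵥ (G z₂ - G z₁))
          + γ ^ 2 * ((G z₂ - G z₁) ⬝ᵥ (G z₂ - G z₁)) := by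
      rw [dot_sub_expand (z₂ - z₁) (γ • (G z₂ - G z₁)), dotProduct_smul,
        smul_dotProduct, dotProduct_smul]
      simp only [smul_eq_mul]; ring
    rw [e1]
    have m0 : (z₂ - z₁) ⬝ᵥ (G z₂ - G z₁) = (G z₂ - G z₁) ⬝ᵥ (z₂ - z₁) :=
      dotProduct_comm _ _
    have m1 := hGmono z₁ z₂
    have m2 := hGlip z₁ z₂
    have hΔΔ : 0 ≤ (z₂ - z₁) ⬝ᵥ (z₂ - z₁) := dot_self_nonneg _
    have m3 : γ ^ 2 * ((G z₂ - G z₁) ⬝ᵥ (G z₂ - G z₁))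
        ≤ γ ^ 2 * (B * ((z₂ - z₁) ⬝ᵥ (z₂ - z₁))) :=
      mul_le_mul_of_nonneg_left m2 (sq_nonneg γ)
    have m4 : γ ^ 2 * B ≤ γ * (μ / 2) := by
      have h5 : γ * B ≤ γ * (B + 1) := by nlinarith
      calc γ ^ 2 * B = γ * (γ * B) := by ring
        _ ≤ γ * (γ * (B + 1)) := by nlinarith
        _ = γ * (μ / 2) := by rw [hγeq]
    have m5 : 2 * γ * (μ / 2 * ((z₂ - z₁) ⬝ᵥ (z₂ - z₁)))
        ≤ 2 * γ * ((G z₂ - G z₁) ⬝ᵥ (z₂ - z₁)) :=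
      mul_le_mul_of_nonneg_left m1 (by positivity)
    have m6 : γ ^ 2 * (B * ((z₂ - z₁) ⬝ᵥ (z₂ - z₁))) ≤ γ * (μ / 2) * ((z₂ - z₁) ⬝ᵥ (z₂ - z₁)) := by
      have := mul_le_mul_of_nonneg_right m4 hΔΔ
      calc γ ^ 2 * (B * ((z₂ - z₁) ⬝ᵥ (z₂ - z₁))) = γ ^ 2 * B * ((z₂ - z₁) ⬝ᵥ (z₂ - z₁)) := by ring
        _ ≤ γ * (μ / 2) * ((z₂ - z₁) ⬝ᵥ (z₂ - z₁)) := this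
    rw [hc, m0]
    nlinarith [m3, m5, m6]
  -- now set up the Banach fixed point argument on EuclideanSpace
  set c' : ℝ := max c 0 with hc'
  have hc'0 : 0 ≤ c' := le_max_right _ _
  have hc'1 : c' < 1 := max_lt hc1 one_pos
  have hcc' : c ≤ c' := le_max_left _ _
  set K : NNReal := ⟨Real.sqrt c', Real.sqrt_nonneg _⟩ with hK
  have hK1 : K < 1 := by
    rw [← NNReal.coe_lt_coe]
    show Real.sqrt c' < 1
    calc Real.sqrt c' < Real.sqrt 1 := Real.sqrt_lt_sqrt hc'0 hc'1
      _ = 1 := Real.sqrt_one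
  -- squared distance as a dot product
  set n2p : (Fin d → ℝ) → (Fin d → ℝ) → ℝ := fun u v => (u - v) ⬝ᵥ (u - v) with hn2p
  set Tm : (Fin d → ℝ) → (Fin d → ℝ) := fun z => z - γ • G z with hTm
  have hcontr2 : ∀ z₁ z₂ : Fin d → ℝ, n2p (Tm z₂) (Tm z₁) ≤ c * n2p z₂ z₁ := by
    intro z₁ z₂
    exact hcontr z₁ z₂
  set Tmap : EuclideanSpace ℝ (Fin d) → EuclideanSpace ℝ (Fin d) := fun z => WithLp.toLp 2 (Tm z) with hTmap
  have hdist2 : ∀ x y : EuclideanSpace ℝ (Fin d), (dist x y) ^ 2 = n2p x y := by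
    intro x y
    rw [EuclideanSpace.dist_eq, Real.sq_sqrt (Finset.sum_nonneg fun i _ => sq_nonneg _)]
    show ∑ i, dist (x i) (y i) ^ 2 = (x - y) ⬝ᵥ (x - y)
    simp only [dotProduct, Real.dist_eq]
    exact Finset.sum_congr rfl fun i _ => by rw [sq_abs, sq]; rfl
  have hlip : ∀ x y : EuclideanSpace ℝ (Fin d),
      dist (Tmap x) (Tmap y) ≤ (K : ℝ) * dist x y := by
    intro x y
    have h1 : (dist (Tmap x) (Tmap y)) ^ 2 ≤ c' * (dist x y) ^ 2 := by
      rw [hdist2, hdist2]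
      have h2 : n2p (Tm x) (Tm y) ≤ c * n2p x y := hcontr2 y x
      have h3 : 0 ≤ n2p x y := dot_self_nonneg _
      calc n2p (Tmap x) (Tmap y) ≤ c * n2p x y := h2
        _ ≤ c' * n2p x y := mul_le_mul_of_nonneg_right hcc' h3
    have h4 : dist (Tmap x) (Tmap y) = Real.sqrt ((dist (Tmap x) (Tmap y)) ^ 2) :=
      (Real.sqrt_sq dist_nonneg).symm
    rw [h4]
    calc Real.sqrt ((dist (Tmap x) (Tmap y)) ^ 2) ≤ Real.sqrt (c' * (dist x y) ^ 2) :=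
        Real.sqrt_le_sqrt h1
      _ = Real.sqrt c' * Real.sqrt ((dist x y) ^ 2) := Real.sqrt_mul hc'0 _
      _ = (K : ℝ) * dist x y := by rw [Real.sqrt_sq dist_nonneg]; rfl
  have hcontracting : ContractingWith K Tmap :=
    ⟨hK1, LipschitzWith.of_dist_le_mul hlip⟩
  have hne : Nonempty (EuclideanSpace ℝ (Fin d)) := ⟨0⟩
  set zstar : EuclideanSpace ℝ (Fin d) := ContractingWith.fixedPoint Tmap hcontracting
    with hzstar
  have hfix : Tmap zstar = zstar := hcontracting.fixedPoint_isFixedPt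
  obtain ⟨zs, hzs⟩ : ∃ zs : Fin d → ℝ, zs = zstar := ⟨zstar, rfl⟩
  have hfix' : Tm zs = zs := by rw [hzs]; exact congrArg WithLp.ofLp hfix
  have hGz : G zs = 0 := by
    have h1 : zs - γ • G zs = zs := hfix'
    have h2 : γ • G zs = 0 := sub_eq_self.mp h1
    rcases smul_eq_zero.mp h2 with h | h
    · exact absurd h (ne_of_gt hγ0)
    · exact h
  have hgradz : grad f zs = 0 := by
    have h1 : Rᵀ *ᵥ (Rᵀ *ᵥ grad f zs) = grad f zs := by
      rw [Matrix.mulVec_mulVec, hRTRT, Matrix.one_mulVec]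
    rw [← h1]
    have h2 : Rᵀ *ᵥ grad f zs = 0 := hGz
    rw [h2, Matrix.mulVec_zero]
  refine ⟨zs, hgradz, ?_⟩
  intro y hy
  have h1 := hfour y zs
  rw [hgradz, hy, sub_zero, zero_dotProduct] at h1
  have h2 : (zs - y) ⬝ᵥ (zs - y) = 0 := by
    have h3 := dot_self_nonneg (zs - y)
    nlinarith
  have h4 : zs - y = 0 := dotProduct_self_eq_zero.mp h2
  exact (sub_eq_zero.mp h4).symm
end

section
/- Let M, L ∈ ℝ^{d×d} be symmetric with L − M positive semidefinite, let f ∈ S(M,L), let A_eq ∈ ℝ^{d₂×d} and b_eq ∈ ℝ^{d₂}. Define the Lagrangian Λ : ℝ^{d+d₂} → ℝ by Λ(z, λ) := f(z) + λᵀ(A_eq z − b_eq). Then Λ ∈ S(M', L'), where M', L' ∈ ℝ^{(d+d₂)×(d+d₂)} are the symmetric block matrices M' := [[M, A_eqᵀ],[A_eq, 0]] and L' := [[L, A_eqᵀ],[A_eq, 0]]; that is, for all (z₁,λ₁), (z₂,λ₂) ∈ ℝ^{d+d₂}: (1/2)(z₂−z₁, λ₂−λ₁)ᵀM'(z₂−z₁,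 λ₂−λ₁) ≤ Λ(z₂,λ₂) − Λ(z₁,λ₁) − ∇Λ(z₁,λ₁)ᵀ(z₂−z₁, λ₂−λ₁) ≤ (1/2)(z₂−z₁, λ₂−λ₁)ᵀL'(z₂−z₁, λ₂−λ₁). -/
open Matrix

lemma grad_dot {ι : Type*} [Fintype ι] [DecidableEq ι]
    (h : (ι → ℝ) → ℝ) (z w : ι → ℝ) :
    grad h z ⬝ᵥ w = fderiv ℝ h z w := by
  have h1 := LinearMap.pi_apply_eq_sum_univ ((fderiv ℝ h z) : (ι → ℝ) →ₗ[ℝ] ℝ) w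
  simp only [ContinuousLinearMap.coe_coe] at h1
  rw [h1]
  apply Finset.sum_congr rfl
  intro i _
  have : (fun j => if i = j then (1:ℝ) else 0) = Pi.single i 1 := by
    funext j; simp [Pi.single_apply, eq_comm]
  rw [this, smul_eq_mul, mul_comm]
  rfl

theorem stmt_18 {d d₂ : ℕ} (M L : Matrix (Fin d) (Fin d) ℝ)
    (hM : M.IsSymm) (hL : L.IsSymm) (hLM : (L - M).PosSemidef)
    (f : (Fin d → ℝ) → ℝ) (hf : SClass M L f)
    (Aeq : Matrix (Fin d₂) (Fin d) ℝ) (beq : Fin d₂ → ℝ)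
    (Lag : (Fin d ⊕ Fin d₂ → ℝ) → ℝ)
    (hLag : ∀ p : Fin d ⊕ Fin d₂ → ℝ,
      Lag p = f (fun i => p (Sum.inl i)) +
        (fun j => p (Sum.inr j)) ⬝ᵥ (Aeq.mulVec (fun i => p (Sum.inl i)) - beq)) :
    SClass (fromBlocks M Aeqᵀ Aeq 0) (fromBlocks L Aeqᵀ Aeq 0) Lag := by
  -- the projection on the z-coordinates, as a continuous linear map
  set π : (Fin d ⊕ Fin d₂ → ℝ) →L[ℝ] (Fin d → ℝ) :=
    ContinuousLinearMap.pi (fun i => ContinuousLinearMap.proj (Sum.inl i)) with hπ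
  have hπ_apply : ∀ p, π p = fun i => p (Sum.inl i) := fun p => rfl
  have hLag' : Lag = fun p => f (π p) +
      ∑ j, p (Sum.inr j) * ((Aeq.mulVec (π p)) j - beq j) := by
    funext p
    rw [hLag]
    simp [dotProduct, hπ_apply]
  have hfdiff : Differentiable ℝ f := hf.1.differentiable one_ne_zero
  -- the derivative of Lag at p
  have hD : ∀ p : Fin d ⊕ Fin d₂ → ℝ, HasFDerivAt Lag
      ((fderiv ℝ f (π p)).comp π +
        ∑ j, (p (Sum.inr j) • (∑ i, Aeq j i • ContinuousLinearMap.proj (R := ℝ)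
            (φ := fun _ : Fin d ⊕ Fin d₂ => ℝ) (Sum.inl i)) +
          ((Aeq.mulVec (π p)) j - beq j) • ContinuousLinearMap.proj (R := ℝ)
            (φ := fun _ : Fin d ⊕ Fin d₂ => ℝ) (Sum.inr j))) p := by
    intro p
    rw [hLag']
    apply HasFDerivAt.add
    · exact ((hfdiff (π p)).hasFDerivAt).comp p π.hasFDerivAt
    · apply HasFDerivAt.fun_sum
      intro j _
      have hc : HasFDerivAt (fun q : Fin d ⊕ Fin d₂ → ℝ => q (Sum.inr j))
          (ContinuousLinearMap.proj (R := ℝ)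
            (φ := fun _ : Fin d ⊕ Fin d₂ => ℝ) (Sum.inr j)) p :=
        (ContinuousLinearMap.proj (R := ℝ)
            (φ := fun _ : Fin d ⊕ Fin d₂ => ℝ) (Sum.inr j)).hasFDerivAt
      have hd : HasFDerivAt (fun q : Fin d ⊕ Fin d₂ → ℝ => (Aeq.mulVec (π q)) j - beq j)
          (∑ i, Aeq j i • ContinuousLinearMap.proj (R := ℝ)
            (φ := fun _ : Fin d ⊕ Fin d₂ => ℝ) (Sum.inl i)) p := by
        have heq : (fun q : Fin d ⊕ Fin d₂ → ℝ => (Aeq.mulVec (π q)) j - beq j) =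
            fun q => (∑ i, Aeq j i * q (Sum.inl i)) - beq j := by
          funext q; simp [Matrix.mulVec, dotProduct, hπ_apply]
        rw [heq]
        apply HasFDerivAt.sub_const
        apply HasFDerivAt.fun_sum
        intro i _
        have hp : HasFDerivAt (fun q : Fin d ⊕ Fin d₂ → ℝ => q (Sum.inl i))
            (ContinuousLinearMap.proj (R := ℝ)
              (φ := fun _ : Fin d ⊕ Fin d₂ => ℝ) (Sum.inl i)) p :=
          (ContinuousLinearMap.proj (R := ℝ)
              (φ := fun _ : Fin d ⊕ Fin d₂ => ℝ) (Sum.inl i)).hasFDerivAt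
        exact hp.const_mul _
      exact hc.mul hd
  constructor
  · rw [hLag']
    apply ContDiff.add
    · exact hf.1.comp π.contDiff
    · apply ContDiff.sum
      intro j _
      apply ContDiff.mul
      · exact (ContinuousLinearMap.proj (R := ℝ)
          (φ := fun _ : Fin d ⊕ Fin d₂ => ℝ) (Sum.inr j)).contDiff
      · apply ContDiff.sub _ contDiff_const
        have heq : (fun q : Fin d ⊕ Fin d₂ → ℝ => (Aeq.mulVec (π q)) j) =
            fun q => ∑ i, Aeq j i * q (Sum.inl i) := by
          funext q; simp [Matrix.mulVec, dotProduct, hπ_apply]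
        rw [heq]
        apply ContDiff.sum
        intro i _
        exact contDiff_const.mul (ContinuousLinearMap.proj (R := ℝ)
          (φ := fun _ : Fin d ⊕ Fin d₂ => ℝ) (Sum.inl i)).contDiff
  · intro p₁ p₂
    set z₁ : Fin d → ℝ := fun i => p₁ (Sum.inl i) with hz₁
    set z₂ : Fin d → ℝ := fun i => p₂ (Sum.inl i) with hz₂
    set l₁ : Fin d₂ → ℝ := fun j => p₁ (Sum.inr j) with hl₁
    set l₂ : Fin d₂ → ℝ := fun j => p₂ (Sum.inr j) with hl₂
    have hΔinl : (p₂ - p₁) ∘ Sum.inl = z₂ - z₁ := rfl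
    have hΔinr : (p₂ - p₁) ∘ Sum.inr = l₂ - l₁ := rfl
    -- express grad Lag p₁ ⬝ᵥ (p₂ - p₁)
    have hgrad : grad Lag p₁ ⬝ᵥ (p₂ - p₁) =
        fderiv ℝ f z₁ (z₂ - z₁) +
          (∑ j, l₁ j * (∑ i, Aeq j i * (z₂ i - z₁ i)) +
           ∑ j, ((Aeq.mulVec z₁) j - beq j) * (l₂ j - l₁ j)) := by
      rw [grad_dot, (hD p₁).fderiv]
      simp only [ContinuousLinearMap.add_apply, ContinuousLinearMap.comp_apply,
        ContinuousLinearMap.sum_apply, ContinuousLinearMap.smul_apply,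
        ContinuousLinearMap.proj_apply, smul_eq_mul]
      have h1 : π (p₂ - p₁) = z₂ - z₁ := rfl
      have h2 : π p₁ = z₁ := rfl
      rw [h1, h2, Finset.sum_add_distrib]
      rfl
    -- express middle quantity
    have hmid : Lag p₂ - Lag p₁ - grad Lag p₁ ⬝ᵥ (p₂ - p₁) =
        (f z₂ - f z₁ - grad f z₁ ⬝ᵥ (z₂ - z₁)) + (l₂ - l₁) ⬝ᵥ Aeq.mulVec (z₂ - z₁) := by
      have e₁ : Lag p₁ = f z₁ + ∑ j, l₁ j * ((Aeq.mulVec z₁) j - beq j) := by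
        rw [hLag p₁]; simp [dotProduct]; rfl
      have e₂ : Lag p₂ = f z₂ + ∑ j, l₂ j * ((Aeq.mulVec z₂) j - beq j) := by
        rw [hLag p₂]; simp [dotProduct]; rfl
      have e₃ : (l₂ - l₁) ⬝ᵥ Aeq.mulVec (z₂ - z₁) =
          ∑ j, (l₂ j - l₁ j) * ((Aeq.mulVec z₂) j - (Aeq.mulVec z₁) j) := by
        simp [dotProduct, Matrix.mulVec_sub]
      have e₄ : ∀ j, (∑ i, Aeq j i * (z₂ i - z₁ i)) =
          (Aeq.mulVec z₂) j - (Aeq.mulVec z₁) j := by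
        intro j
        have h5 : (Aeq.mulVec (z₂ - z₁)) j = ∑ i, Aeq j i * (z₂ i - z₁ i) := by
          simp [Matrix.mulVec, dotProduct]
        rw [← h5, Matrix.mulVec_sub]
        rfl
      rw [e₁, e₂, e₃, hgrad, grad_dot]
      simp only [e₄]
      have key : ∑ j, l₂ j * ((Aeq.mulVec z₂) j - beq j)
          - ∑ j, l₁ j * ((Aeq.mulVec z₁) j - beq j)
          - ∑ j, l₁ j * ((Aeq.mulVec z₂) j - (Aeq.mulVec z₁) j)
          - ∑ j, ((Aeq.mulVec z₁) j - beq j) * (l₂ j - l₁ j)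
          = ∑ j, (l₂ j - l₁ j) * ((Aeq.mulVec z₂) j - (Aeq.mulVec z₁) j) := by
        rw [← Finset.sum_sub_distrib, ← Finset.sum_sub_distrib, ← Finset.sum_sub_distrib]
        apply Finset.sum_congr rfl
        intro j _
        ring
      linarith [key]
    -- express the quadratic forms
    have hquad : ∀ (N : Matrix (Fin d) (Fin d) ℝ),
        (p₂ - p₁) ⬝ᵥ (fromBlocks N Aeqᵀ Aeq 0).mulVec (p₂ - p₁) =
          (z₂ - z₁) ⬝ᵥ N.mulVec (z₂ - z₁) + 2 * ((l₂ - l₁) ⬝ᵥ Aeq.mulVec (z₂ - z₁)) := by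
      intro N
      have h0 : (p₂ - p₁) = Sum.elim ((p₂ - p₁) ∘ Sum.inl) ((p₂ - p₁) ∘ Sum.inr) :=
        (Sum.elim_comp_inl_inr _).symm
      rw [Matrix.fromBlocks_mulVec, hΔinl, hΔinr]
      conv_lhs => rw [h0]
      rw [hΔinl, hΔinr, sumElim_dotProduct_sumElim]
      rw [dotProduct_add, dotProduct_add, Matrix.zero_mulVec,
        dotProduct_zero, Matrix.dotProduct_mulVec (z₂ - z₁) Aeqᵀ,
        Matrix.vecMul_transpose, dotProduct_comm (Aeq *ᵥ (z₂ - z₁)) (l₂ - l₁)]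
      ring
    rw [hmid, hquad M, hquad L]
    have h := hf.2 z₁ z₂
    exact ⟨by linarith [h.1], by linarith [h.2]⟩
end
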